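/- (Inequality (eqn:3).) Let Ω be a finite multiset of s index pairs from [m]×[n], let A_r ∈ ℝ^{m×n} satisfy P_T(A_r) = A_r, and let B ∈ ℝ^{m×n} be arbitrary. Suppose Y ∈ ℝ^{m×n} satisfies (i) ‖P_T(Y) − UVᵀ‖_F ≤ √(r/(2n)), (ii) ‖P_{T⊥}(Y)‖ ≤ 1/2, and (iii) |⟨Y, M⟩| ≤ √(3 m n r log(2n)/(8s)) · √(⟨R_Ω(M), M⟩) for all M ∈ ℝ^{m×n}. Then ⟨B − A_r, UVᵀ⟩ ≥ −√(r/(2n))·‖P_T(A_r − B)‖_F − (1/2)·‖P_{T⊥}(B)‖_* − √(3 m n r log(2n)/(8s)) · √(⟨R_Ω(A_r − B), A_r − B⟩). -/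

import Mathlib

open scoped BigOperators
open Matrix
open MeasureTheory

namespace MC

variable {m n r s : ℕ}

/-- Trace inner product `⟨X,Y⟩ = trace(Xᵀ Y)`. -/
def ip (A B : Matrix (Fin m) (Fin n) ℝ) : ℝ := ∑ i, ∑ j, A i j * B i j

/-- Frobenius norm. -/
noncomputable def fro (A : Matrix (Fin m) (Fin n) ℝ) : ℝ := Real.sqrt (ip A A)

/-- Largest absolute value of an entry. -/
noncomputable def infNorm (A : Matrix (Fin m) (Fin n) ℝ) : ℝ := ⨆ i, ⨆ j, |A i j|

/-- Nuclear norm: sum of singular values. -/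
noncomputable def nuclearNorm (A : Matrix (Fin m) (Fin n) ℝ) : ℝ :=
  ∑ j, Real.sqrt ((show (Aᵀ * A).IsHermitian by
    rw [← Matrix.conjTranspose_eq_transpose_of_trivial]; exact Matrix.isHermitian_conjTranspose_mul_self A).eigenvalues j)

/-- Spectral norm: largest singular value. -/
noncomputable def specNorm (A : Matrix (Fin m) (Fin n) ℝ) : ℝ :=
  ⨆ j, Real.sqrt ((show (Aᵀ * A).IsHermitian by
    rw [← Matrix.conjTranspose_eq_transpose_of_trivial]; exact Matrix.isHermitian_conjTranspose_mul_self A).eigenvalues j)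

/-- Sampling operator for a multiset of index pairs. -/
def RΩ (Ω : Multiset (Fin m × Fin n)) (Z : Matrix (Fin m) (Fin n) ℝ) :
    Matrix (Fin m) (Fin n) ℝ :=
  Matrix.of fun i j => (Ω.count (i, j)) * Z i j

def PT (U : Matrix (Fin m) (Fin r) ℝ) (V : Matrix (Fin n) (Fin r) ℝ)
    (Z : Matrix (Fin m) (Fin n) ℝ) : Matrix (Fin m) (Fin n) ℝ :=
  U * Uᵀ * Z + Z * (V * Vᵀ) - U * Uᵀ * Z * (V * Vᵀ)

def PTperp (U : Matrix (Fin m) (Fin r) ℝ) (V : Matrix (Fin n) (Fin r) ℝ)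
    (Z : Matrix (Fin m) (Fin n) ℝ) : Matrix (Fin m) (Fin n) ℝ :=
  (1 - U * Uᵀ) * Z * (1 - V * Vᵀ)

/-- Objective of nuclear-norm regularized least squares. -/
noncomputable def obj (Ω : Multiset (Fin m × Fin n)) (A : Matrix (Fin m) (Fin n) ℝ)
    (lam : ℝ) (B : Matrix (Fin m) (Fin n) ℝ) : ℝ :=
  (1 / 2) * (Ω.map fun p => (B p.1 p.2 - A p.1 p.2) ^ 2).sum + lam * nuclearNorm B

/-- Uniform probability measure on index pairs. -/
noncomputable def unifPair (m n : ℕ) : Measure (Fin m × Fin n) :=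
  (Fintype.card (Fin m × Fin n) : ENNReal)⁻¹ • Measure.count

/-- Law of `s` i.i.d. uniform index pairs. -/
noncomputable def sampleMeasure (m n s : ℕ) : Measure (Fin s → Fin m × Fin n) :=
  Measure.pi fun _ => unifPair m n

/-- The multiset of sampled indices. -/
def toMS (ω : Fin s → Fin m × Fin n) : Multiset (Fin m × Fin n) :=
  Multiset.map ω Finset.univ.val

theorem Matrix.isHermitian_transpose_mul_self {k l : ℕ} (A : Matrix (Fin k) (Fin l) ℝ) :
    (Aᴴ * A).IsHermitian := Matrix.isHermitian_conjTranspose_mul_self A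

section AuxLemmas

variable {m n r : ℕ}

lemma ip_trace (A B : Matrix (Fin m) (Fin n) ℝ) : ip A B = (Aᵀ * B).trace := by
  simp only [ip, Matrix.trace, Matrix.diag, Matrix.mul_apply, Matrix.transpose_apply]
  rw [Finset.sum_comm]

lemma ip_comm (A B : Matrix (Fin m) (Fin n) ℝ) : ip A B = ip B A := by
  simp [ip, mul_comm]

lemma ip_add_left (A B C : Matrix (Fin m) (Fin n) ℝ) : ip (A + B) C = ip A C + ip B C := by
  simp [ip, add_mul, Finset.sum_add_distrib]

lemma ip_add_right (A B C : Matrix (Fin m) (Fin n) ℝ) : ip A (B + C) = ip A B + ip A C := by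
  simp [ip, mul_add, Finset.sum_add_distrib]

lemma ip_sub_left (A B C : Matrix (Fin m) (Fin n) ℝ) : ip (A - B) C = ip A C - ip B C := by
  simp [ip, sub_mul, Finset.sum_sub_distrib]

lemma ip_sub_right (A B C : Matrix (Fin m) (Fin n) ℝ) : ip A (B - C) = ip A B - ip A C := by
  simp [ip, mul_sub, Finset.sum_sub_distrib]

lemma ip_neg_left (A B : Matrix (Fin m) (Fin n) ℝ) : ip (-A) B = -ip A B := by
  simp [ip, Finset.sum_neg_distrib]

lemma ip_neg_right (A B : Matrix (Fin m) (Fin n) ℝ) : ip A (-B) = -ip A B := by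
  simp [ip, Finset.sum_neg_distrib]

lemma ip_mul_left {k : ℕ} (C : Matrix (Fin m) (Fin k) ℝ) (A : Matrix (Fin k) (Fin n) ℝ)
    (B : Matrix (Fin m) (Fin n) ℝ) : ip (C * A) B = ip A (Cᵀ * B) := by
  rw [ip_trace, ip_trace, Matrix.transpose_mul, Matrix.mul_assoc]

lemma ip_mul_right {k : ℕ} (C : Matrix (Fin k) (Fin n) ℝ) (A : Matrix (Fin m) (Fin k) ℝ)
    (B : Matrix (Fin m) (Fin n) ℝ) : ip (A * C) B = ip A (B * Cᵀ) := by
  rw [ip_trace, ip_trace, Matrix.transpose_mul,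
    Matrix.trace_mul_cycle (Cᵀ) (Aᵀ) B, Matrix.trace_mul_comm]

lemma ip_prod (A B : Matrix (Fin m) (Fin n) ℝ) :
    ip A B = ∑ p : Fin m × Fin n, A p.1 p.2 * B p.1 p.2 := by
  rw [ip]
  exact (Fintype.sum_prod_type (f := fun p : Fin m × Fin n => A p.1 p.2 * B p.1 p.2)).symm

lemma ip_self_nonneg (A : Matrix (Fin m) (Fin n) ℝ) : 0 ≤ ip A A :=
  Finset.sum_nonneg fun i _ => Finset.sum_nonneg fun j _ => mul_self_nonneg _

lemma fro_nonneg (A : Matrix (Fin m) (Fin n) ℝ) : 0 ≤ fro A := Real.sqrt_nonneg _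

lemma ip_le_fro (A B : Matrix (Fin m) (Fin n) ℝ) : ip A B ≤ fro A * fro B := by
  have h := Real.sum_mul_le_sqrt_mul_sqrt (Finset.univ : Finset (Fin m × Fin n))
    (fun p => A p.1 p.2) (fun p => B p.1 p.2)
  rw [ip_prod]
  convert h using 2 <;> rw [fro, ip_prod] <;> congr 1 <;>
    exact Finset.sum_congr rfl fun p _ => (sq _).symm

lemma fro_neg (A : Matrix (Fin m) (Fin n) ℝ) : fro (-A) = fro A := by
  simp [fro, ip]

lemma abs_ip_le_fro (A B : Matrix (Fin m) (Fin n) ℝ) : |ip A B| ≤ fro A * fro B := by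
  rw [abs_le]
  refine ⟨?_, ip_le_fro A B⟩
  have h := ip_le_fro (-A) B
  rw [fro_neg] at h
  have e : ip (-A) B = -ip A B := ip_neg_left A B
  linarith [e ▸ h]

/-! ### PT / PTperp algebra -/

variable (U : Matrix (Fin m) (Fin r) ℝ) (V : Matrix (Fin n) (Fin r) ℝ)

lemma cancelU {ι : Type*} [Fintype ι] (hUo : Uᵀ * U = 1) (X : Matrix (Fin r) ι ℝ) :
    Uᵀ * (U * X) = X := by rw [← Matrix.mul_assoc, hUo, Matrix.one_mul]

lemma PTperp_eq (Z : Matrix (Fin m) (Fin n) ℝ) : PTperp U V Z = Z - PT U V Z := by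
  simp only [PTperp, PT, Matrix.sub_mul, Matrix.mul_sub, Matrix.one_mul, Matrix.mul_one,
    Matrix.mul_assoc]
  abel

lemma PT_sub (A B : Matrix (Fin m) (Fin n) ℝ) : PT U V (A - B) = PT U V A - PT U V B := by
  simp only [PT, Matrix.mul_sub, Matrix.sub_mul]
  abel

lemma PTperp_sub (A B : Matrix (Fin m) (Fin n) ℝ) :
    PTperp U V (A - B) = PTperp U V A - PTperp U V B := by
  simp only [PTperp, Matrix.mul_sub, Matrix.sub_mul]
  abel

lemma PT_UV (hUo : Uᵀ * U = 1) (hVo : Vᵀ * V = 1) : PT U V (U * Vᵀ) = U * Vᵀ := by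
  simp only [PT, Matrix.mul_assoc, cancelU U hUo]
  have h : Vᵀ * (V * Vᵀ) = Vᵀ := by rw [← Matrix.mul_assoc, hVo, Matrix.one_mul]
  rw [h]
  abel

lemma PTperp_PT (hUo : Uᵀ * U = 1) (hVo : Vᵀ * V = 1) (Z : Matrix (Fin m) (Fin n) ℝ) :
    PTperp U V (PT U V Z) = 0 := by
  have hV : Vᵀ * (V * Vᵀ) = Vᵀ := by rw [← Matrix.mul_assoc, hVo, Matrix.one_mul]
  simp only [PTperp, PT, Matrix.sub_mul, Matrix.mul_sub, Matrix.add_mul, Matrix.mul_add,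
    Matrix.one_mul, Matrix.mul_one, Matrix.mul_assoc, cancelU U hUo, hV]
  abel

lemma PT_PTperp (hUo : Uᵀ * U = 1) (hVo : Vᵀ * V = 1) (Z : Matrix (Fin m) (Fin n) ℝ) :
    PT U V (PTperp U V Z) = 0 := by
  have hV : Vᵀ * (V * Vᵀ) = Vᵀ := by rw [← Matrix.mul_assoc, hVo, Matrix.one_mul]
  simp only [PT, PTperp, Matrix.sub_mul, Matrix.mul_sub, Matrix.one_mul, Matrix.mul_one,
    Matrix.mul_assoc, cancelU U hUo, hV]
  abel

lemma PT_idem (hUo : Uᵀ * U = 1) (hVo : Vᵀ * V = 1) (Z : Matrix (Fin m) (Fin n) ℝ) :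
    PT U V (PT U V Z) = PT U V Z := by
  have h := PTperp_eq U V (PT U V Z)
  rw [PTperp_PT U V hUo hVo] at h
  exact (sub_eq_zero.mp h.symm).symm

lemma PTperp_idem (hUo : Uᵀ * U = 1) (hVo : Vᵀ * V = 1) (Z : Matrix (Fin m) (Fin n) ℝ) :
    PTperp U V (PTperp U V Z) = PTperp U V Z := by
  rw [PTperp_eq U V (PTperp U V Z), PT_PTperp U V hUo hVo, sub_zero]

lemma ip_PT (A B : Matrix (Fin m) (Fin n) ℝ) : ip (PT U V A) B = ip A (PT U V B) := by
  have hUU : (U * Uᵀ)ᵀ = U * Uᵀ := by rw [Matrix.transpose_mul, Matrix.transpose_transpose]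
  have hVV : (V * Vᵀ)ᵀ = V * Vᵀ := by rw [Matrix.transpose_mul, Matrix.transpose_transpose]
  rw [PT, PT, ip_sub_left, ip_add_left,
    ip_mul_left (U * Uᵀ) A B, hUU,
    ip_mul_right (V * Vᵀ) A B, hVV,
    ip_mul_right (V * Vᵀ) (U * Uᵀ * A) B, hVV,
    ip_mul_left (U * Uᵀ) A (B * (V * Vᵀ)), hUU,
    ip_sub_right, ip_add_right, Matrix.mul_assoc (U * Uᵀ) B (V * Vᵀ)]

lemma ip_PTperp (A B : Matrix (Fin m) (Fin n) ℝ) :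
    ip (PTperp U V A) B = ip A (PTperp U V B) := by
  rw [PTperp, PTperp,
    ip_mul_right (1 - V * Vᵀ) ((1 - U * Uᵀ) * A) B,
    Matrix.transpose_sub, Matrix.transpose_one, Matrix.transpose_mul, Matrix.transpose_transpose,
    ip_mul_left (1 - U * Uᵀ) A (B * (1 - V * Vᵀ)),
    Matrix.transpose_sub, Matrix.transpose_one, Matrix.transpose_mul, Matrix.transpose_transpose,
    Matrix.mul_assoc (1 - U * Uᵀ) B (1 - V * Vᵀ)]

lemma RΩ_neg (Ω : Multiset (Fin m × Fin n)) (Z : Matrix (Fin m) (Fin n) ℝ) :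
    RΩ Ω (-Z) = -(RΩ Ω Z) := by
  ext i j
  simp [RΩ]

/-! ### Duality between spectral and nuclear norms -/

lemma specNorm_nonneg (A : Matrix (Fin m) (Fin n) ℝ) : 0 ≤ specNorm A :=
  Real.iSup_nonneg fun _ => Real.sqrt_nonneg _

lemma nuclearNorm_nonneg (A : Matrix (Fin m) (Fin n) ℝ) : 0 ≤ nuclearNorm A :=
  Finset.sum_nonneg fun _ _ => Real.sqrt_nonneg _

lemma sqrt_eig_le_specNorm (Z : Matrix (Fin m) (Fin n) ℝ) (j : Fin n) :
    Real.sqrt ((Matrix.isHermitian_transpose_mul_self Z).eigenvalues j) ≤ specNorm Z :=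
  le_ciSup (f := fun j => Real.sqrt ((Matrix.isHermitian_transpose_mul_self Z).eigenvalues j))
    (Set.Finite.bddAbove (Set.finite_range _)) j

lemma gram_diag (M : Matrix (Fin m) (Fin n) ℝ) (j : Fin n) :
    (Mᵀ * M) j j = ∑ i, (M i j) ^ 2 := by
  simp [Matrix.mul_apply, sq]

lemma diag_quad (A : Matrix (Fin n) (Fin n) ℝ) (E : Fin n → ℝ) (j : Fin n) :
    (Aᵀ * Matrix.diagonal E * A) j j = ∑ k, E k * (A k j) ^ 2 := by
  rw [Matrix.mul_apply]
  refine Finset.sum_congr rfl fun k _ => ?_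
  rw [Matrix.mul_diagonal, Matrix.transpose_apply]; ring

lemma abs_sum_mul_le {ι : Type*} [Fintype ι] (f g : ι → ℝ) :
    |∑ i, f i * g i| ≤ Real.sqrt (∑ i, f i ^ 2) * Real.sqrt (∑ i, g i ^ 2) := by
  rw [abs_le]
  constructor
  · have h := Real.sum_mul_le_sqrt_mul_sqrt (Finset.univ : Finset ι) (fun i => -f i) g
    have e1 : ∑ i, -f i * g i = -∑ i, f i * g i := by
      rw [← Finset.sum_neg_distrib]; exact Finset.sum_congr rfl fun i _ => by ring
    have e2 : ∑ i, (-f i) ^ 2 = ∑ i, f i ^ 2 := Finset.sum_congr rfl fun i _ => by ring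
    rw [e1, e2] at h; linarith
  · exact Real.sum_mul_le_sqrt_mul_sqrt _ _ _

lemma unit_mul_transpose {k : ℕ} (A : Matrix (Fin k) (Fin k) ℝ) (hA : A.IsHermitian) :
    (hA.eigenvectorUnitary : Matrix (Fin k) (Fin k) ℝ) *
      (hA.eigenvectorUnitary : Matrix (Fin k) (Fin k) ℝ)ᵀ = 1 := by
  have h := (Matrix.mem_unitaryGroup_iff).mp hA.eigenvectorUnitary.2
  rwa [Matrix.star_eq_conjTranspose, Matrix.conjTranspose_eq_transpose_of_trivial] at h

lemma transpose_mul_unit {k : ℕ} (A : Matrix (Fin k) (Fin k) ℝ) (hA : A.IsHermitian) :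
    (hA.eigenvectorUnitary : Matrix (Fin k) (Fin k) ℝ)ᵀ *
      (hA.eigenvectorUnitary : Matrix (Fin k) (Fin k) ℝ) = 1 := by
  have h := (Matrix.mem_unitaryGroup_iff').mp hA.eigenvectorUnitary.2
  rwa [Matrix.star_eq_conjTranspose, Matrix.conjTranspose_eq_transpose_of_trivial] at h

lemma spectral_real (X : Matrix (Fin m) (Fin n) ℝ) :
    ((Matrix.isHermitian_transpose_mul_self X).eigenvectorUnitary : Matrix (Fin n) (Fin n) ℝ)ᵀ
      * (Xᴴ * X) *
      ((Matrix.isHermitian_transpose_mul_self X).eigenvectorUnitary : Matrix (Fin n) (Fin n) ℝ)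
    = Matrix.diagonal (Matrix.isHermitian_transpose_mul_self X).eigenvalues := by
  have h := (Matrix.isHermitian_transpose_mul_self X).conjStarAlgAut_star_eigenvectorUnitary
  rw [Unitary.conjStarAlgAut_star_apply] at h
  rw [Matrix.star_eq_conjTranspose, Matrix.conjTranspose_eq_transpose_of_trivial] at h
  rw [h]
  exact congrArg Matrix.diagonal (by ext x; simp [RCLike.ofReal_real_eq_id])

lemma spectral_real' (X : Matrix (Fin m) (Fin n) ℝ) :
    Xᴴ * X =
      ((Matrix.isHermitian_transpose_mul_self X).eigenvectorUnitary : Matrix (Fin n) (Fin n) ℝ)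
      * Matrix.diagonal (Matrix.isHermitian_transpose_mul_self X).eigenvalues *
      ((Matrix.isHermitian_transpose_mul_self X).eigenvectorUnitary :
        Matrix (Fin n) (Fin n) ℝ)ᵀ := by
  set P : Matrix (Fin n) (Fin n) ℝ :=
    ((Matrix.isHermitian_transpose_mul_self X).eigenvectorUnitary : Matrix (Fin n) (Fin n) ℝ)
  rw [← spectral_real X]
  calc Xᴴ * X = (P * Pᵀ) * (Xᴴ * X) * (P * Pᵀ) := by
        rw [unit_mul_transpose, Matrix.one_mul, Matrix.mul_one]
    _ = P * (Pᵀ * (Xᴴ * X) * P) * Pᵀ := by simp only [Matrix.mul_assoc]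

lemma col_bound (Z : Matrix (Fin m) (Fin n) ℝ) (W : Matrix (Fin n) (Fin n) ℝ) (j : Fin n)
    (hW : (Wᵀ * W) j j = 1) : ∑ i, ((Z * W) i j) ^ 2 ≤ specNorm Z ^ 2 := by
  set Q : Matrix (Fin n) (Fin n) ℝ :=
    ((Matrix.isHermitian_transpose_mul_self Z).eigenvectorUnitary : Matrix (Fin n) (Fin n) ℝ)
    with hQd
  have hT : Zᴴ = Zᵀ := Matrix.conjTranspose_eq_transpose_of_trivial Z
  have hQ2 : Q * Qᵀ = 1 := unit_mul_transpose _ _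
  have e : (Z * W)ᵀ * (Z * W) =
      (Qᵀ * W)ᵀ * Matrix.diagonal (Matrix.isHermitian_transpose_mul_self Z).eigenvalues
        * (Qᵀ * W) := by
    rw [Matrix.transpose_mul, Matrix.transpose_mul, Matrix.transpose_transpose, ← hT]
    calc Wᵀ * Zᴴ * (Z * W) = Wᵀ * (Zᴴ * Z) * W := by simp only [Matrix.mul_assoc]
      _ = Wᵀ * (Q * Matrix.diagonal (Matrix.isHermitian_transpose_mul_self Z).eigenvalues * Qᵀ)
            * W := congrArg (fun M => Wᵀ * M * W) (spectral_real' Z)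
      _ = Wᵀ * Q * Matrix.diagonal (Matrix.isHermitian_transpose_mul_self Z).eigenvalues
            * (Qᵀ * W) := by simp only [Matrix.mul_assoc]
  have e2 : ∑ i, ((Z * W) i j) ^ 2
      = ∑ k, (Matrix.isHermitian_transpose_mul_self Z).eigenvalues k * ((Qᵀ * W) k j) ^ 2 := by
    rw [← gram_diag, e, diag_quad]
  have hb : ∀ k, (Matrix.isHermitian_transpose_mul_self Z).eigenvalues k ≤ specNorm Z ^ 2 := by
    intro k
    have h0 := Matrix.eigenvalues_conjTranspose_mul_self_nonneg Z k
    have h1 := sqrt_eig_le_specNorm Z k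
    nlinarith [Real.sq_sqrt h0,
      Real.sqrt_nonneg ((Matrix.isHermitian_transpose_mul_self Z).eigenvalues k)]
  have hsum : ∑ k, ((Qᵀ * W) k j) ^ 2 = 1 := by
    rw [← gram_diag]
    have h : (Qᵀ * W)ᵀ * (Qᵀ * W) = Wᵀ * W := by
      rw [Matrix.transpose_mul, Matrix.transpose_transpose]
      calc Wᵀ * Q * (Qᵀ * W) = Wᵀ * (Q * Qᵀ) * W := by simp only [Matrix.mul_assoc]
        _ = Wᵀ * W := by rw [hQ2, Matrix.mul_one]
    rw [h, hW]
  calc ∑ i, ((Z * W) i j) ^ 2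
      = ∑ k, (Matrix.isHermitian_transpose_mul_self Z).eigenvalues k * ((Qᵀ * W) k j) ^ 2 := e2
    _ ≤ ∑ k, specNorm Z ^ 2 * ((Qᵀ * W) k j) ^ 2 :=
        Finset.sum_le_sum fun k _ => mul_le_mul_of_nonneg_right (hb k) (sq_nonneg _)
    _ = specNorm Z ^ 2 * ∑ k, ((Qᵀ * W) k j) ^ 2 := (Finset.mul_sum _ _ _).symm
    _ = specNorm Z ^ 2 := by rw [hsum, mul_one]

lemma abs_ip_le_spec_nuclear (Z X : Matrix (Fin m) (Fin n) ℝ) :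
    |ip Z X| ≤ specNorm Z * nuclearNorm X := by
  set P : Matrix (Fin n) (Fin n) ℝ :=
    ((Matrix.isHermitian_transpose_mul_self X).eigenvectorUnitary : Matrix (Fin n) (Fin n) ℝ)
    with hPd
  have hT : Xᴴ = Xᵀ := Matrix.conjTranspose_eq_transpose_of_trivial X
  have hP1 : Pᵀ * P = 1 := transpose_mul_unit _ _
  have hP2 : P * Pᵀ = 1 := unit_mul_transpose _ _
  have hinv : ip (Z * P) (X * P) = ip Z X := by
    rw [ip_mul_right, Matrix.mul_assoc, hP2, Matrix.mul_one]
  have hcol : ∀ j, ∑ i, ((X * P) i j) ^ 2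
      = (Matrix.isHermitian_transpose_mul_self X).eigenvalues j := by
    intro j
    rw [← gram_diag]
    have h : (X * P)ᵀ * (X * P)
        = Matrix.diagonal (Matrix.isHermitian_transpose_mul_self X).eigenvalues := by
      rw [Matrix.transpose_mul, ← spectral_real X, ← hT]
      simp only [Matrix.mul_assoc]
      rfl
    rw [h, Matrix.diagonal_apply_eq]
  have hcolZ : ∀ j, ∑ i, ((Z * P) i j) ^ 2 ≤ specNorm Z ^ 2 := fun j =>
    col_bound Z P j (by rw [hP1, Matrix.one_apply_eq])
  have hswap : ip (Z * P) (X * P) = ∑ j, ∑ i, (Z * P) i j * (X * P) i j := by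
    rw [ip, Finset.sum_comm]
  calc |ip Z X| = |∑ j, ∑ i, (Z * P) i j * (X * P) i j| := by rw [← hinv, hswap]
    _ ≤ ∑ j, |∑ i, (Z * P) i j * (X * P) i j| := Finset.abs_sum_le_sum_abs _ _
    _ ≤ ∑ j, Real.sqrt (∑ i, ((Z * P) i j) ^ 2) * Real.sqrt (∑ i, ((X * P) i j) ^ 2) :=
        Finset.sum_le_sum fun j _ => abs_sum_mul_le _ _
    _ ≤ ∑ j, specNorm Z *
          Real.sqrt ((Matrix.isHermitian_transpose_mul_self X).eigenvalues j) := by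
        refine Finset.sum_le_sum fun j _ => ?_
        rw [hcol j]
        refine mul_le_mul_of_nonneg_right ?_ (Real.sqrt_nonneg _)
        calc Real.sqrt (∑ i, ((Z * P) i j) ^ 2) ≤ Real.sqrt (specNorm Z ^ 2) :=
              Real.sqrt_le_sqrt (hcolZ j)
          _ = specNorm Z := Real.sqrt_sq (specNorm_nonneg Z)
    _ = specNorm Z * nuclearNorm X := by rw [← Finset.mul_sum, nuclearNorm]; rfl

end AuxLemmas


/-- inequality (eqn:3): for any `B` and any `A_r` with
`P_T(A_r) = A_r`, given a dual certificate `Y` satisfying (i)–(iii),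
`⟨B − A_r, UVᵀ⟩ ≥ −√(r/(2n))‖P_T(A_r − B)‖_F − (1/2)‖P_{T⊥}(B)‖_*
  − √(3mnr log(2n)/(8s))·√⟨R_Ω(A_r − B), A_r − B⟩`. -/
theorem stmt5 (m n r s : ℕ) (hm : 0 < m) (hmn : m ≤ n)
    (U : Matrix (Fin m) (Fin r) ℝ) (V : Matrix (Fin n) (Fin r) ℝ)
    (hUo : Uᵀ * U = 1) (hVo : Vᵀ * V = 1)
    (Ω : Multiset (Fin m × Fin n)) (hcard : Ω.card = s)
    (Ar : Matrix (Fin m) (Fin n) ℝ) (hArT : PT U V Ar = Ar)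
    (B : Matrix (Fin m) (Fin n) ℝ)
    (Y : Matrix (Fin m) (Fin n) ℝ)
    (hY1 : fro (PT U V Y - U * Vᵀ) ≤ Real.sqrt (r / (2 * n)))
    (hY2 : specNorm (PTperp U V Y) ≤ 1 / 2)
    (hY3 : ∀ M : Matrix (Fin m) (Fin n) ℝ,
        |ip Y M| ≤ Real.sqrt (3 * m * n * r * Real.log (2 * n) / (8 * s)) *
          Real.sqrt (ip (RΩ Ω M) M)) :
    ip (B - Ar) (U * Vᵀ)
      ≥ -(Real.sqrt (r / (2 * n)) * fro (PT U V (Ar - B)))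
        - (1 / 2) * nuclearNorm (PTperp U V B)
        - Real.sqrt (3 * m * n * r * Real.log (2 * n) / (8 * s)) *
            Real.sqrt (ip (RΩ Ω (Ar - B)) (Ar - B)) := by
  have hn : 0 < n := lt_of_lt_of_le hm hmn
  set Δ : Matrix (Fin m) (Fin n) ℝ := B - Ar with hΔ
  set W : Matrix (Fin m) (Fin n) ℝ := U * Vᵀ - PT U V Y with hWdef
  have hWT : PT U V W = W := by
    rw [hWdef, PT_sub, PT_UV U V hUo hVo, PT_idem U V hUo hVo]
  have hid1 : ip Δ (U * Vᵀ) = ip Δ W + ip Δ (PT U V Y) := by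
    rw [hWdef, ip_sub_right]; ring
  have hid2 : ip Δ (PT U V Y) = ip Δ Y - ip Δ (PTperp U V Y) := by
    rw [PTperp_eq, ip_sub_right]; ring
  have hPerpAr : PTperp U V Ar = 0 := by rw [PTperp_eq, hArT, sub_self]
  have hPerpΔ : PTperp U V Δ = PTperp U V B := by
    rw [hΔ, PTperp_sub, hPerpAr, sub_zero]
  have hid3 : ip Δ (PTperp U V Y) = ip (PTperp U V B) (PTperp U V Y) :=
    calc ip Δ (PTperp U V Y) = ip (PTperp U V Δ) Y := (ip_PTperp U V Δ Y).symm
      _ = ip (PTperp U V B) Y := by rw [hPerpΔ]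
      _ = ip (PTperp U V (PTperp U V B)) Y := by rw [PTperp_idem U V hUo hVo]
      _ = ip (PTperp U V B) (PTperp U V Y) := ip_PTperp U V _ Y
  have hb1 : |ip Δ W| ≤ Real.sqrt (r / (2 * n)) * fro (PT U V (Ar - B)) := by
    have h1 : ip Δ W = ip (PT U V Δ) W := by
      conv_lhs => rw [← hWT]
      exact (ip_PT U V Δ W).symm
    have h3 : fro W ≤ Real.sqrt (r / (2 * n)) := by
      have e : W = -(PT U V Y - U * Vᵀ) := by rw [hWdef, neg_sub]
      rw [e, fro_neg]; exact hY1
    have h4 : fro (PT U V Δ) = fro (PT U V (Ar - B)) := by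
      have e : PT U V (Ar - B) = -(PT U V Δ) := by
        rw [hΔ, PT_sub, PT_sub, neg_sub]
      rw [e, fro_neg]
    calc |ip Δ W| = |ip (PT U V Δ) W| := by rw [h1]
      _ ≤ fro (PT U V Δ) * fro W := abs_ip_le_fro _ _
      _ ≤ fro (PT U V Δ) * Real.sqrt (r / (2 * n)) :=
          mul_le_mul_of_nonneg_left h3 (fro_nonneg _)
      _ = Real.sqrt (r / (2 * n)) * fro (PT U V (Ar - B)) := by rw [h4]; ring
  have hb2 : |ip Δ Y| ≤ Real.sqrt (3 * m * n * r * Real.log (2 * n) / (8 * s)) *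
      Real.sqrt (ip (RΩ Ω (Ar - B)) (Ar - B)) := by
    have h := hY3 Δ
    have e : ip (RΩ Ω Δ) Δ = ip (RΩ Ω (Ar - B)) (Ar - B) := by
      have hne : Δ = -(Ar - B) := by rw [hΔ, neg_sub]
      rw [hne, RΩ_neg, ip_neg_left, ip_neg_right, neg_neg]
    rw [e, ip_comm Y Δ] at h
    exact h
  have hb3 : |ip (PTperp U V B) (PTperp U V Y)| ≤ 1 / 2 * nuclearNorm (PTperp U V B) :=
    calc |ip (PTperp U V B) (PTperp U V Y)|
        = |ip (PTperp U V Y) (PTperp U V B)| := by rw [ip_comm]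
      _ ≤ specNorm (PTperp U V Y) * nuclearNorm (PTperp U V B) := abs_ip_le_spec_nuclear _ _
      _ ≤ 1 / 2 * nuclearNorm (PTperp U V B) :=
          mul_le_mul_of_nonneg_right hY2 (nuclearNorm_nonneg _)
  have key : ip Δ (U * Vᵀ) = ip Δ W + ip Δ Y - ip (PTperp U V B) (PTperp U V Y) := by
    rw [hid1, hid2, hid3]; ring
  rw [ge_iff_le, key]
  linarith [neg_abs_le (ip Δ W), neg_abs_le (ip Δ Y),
    le_abs_self (ip (PTperp U V B) (PTperp U V Y)), hb1, hb2, hb3]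

end MC
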